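/- Let k ≥ 0 and define, for an injective tuple a : Fin (2k+1) → ℝ/ℤ, sgn(a) := sign σ for any (equivalently, every) permutation σ with a ∘ σ in cyclic order. Then for every permutation τ of Fin (2k+1), sgn(a ∘ τ) = (sign τ) · sgn(a). -/

import Mathlib

noncomputable section
open Classical

instance : Fact ((0:ℝ) < 1) := ⟨one_pos⟩

/-- The circle `ℝ/ℤ`. -/
abbrev S1 := AddCircle (1 : ℝ)

/-- A tuple of points on the circle is in cyclic order if every increasing triple of
indices gives points in strict circular betweenness. -/
def InCyclicOrder {m : ℕ} (b : Fin m → S1) : Prop :=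
  ∀ i j l : Fin m, i < j → j < l → sbtw (b i) (b j) (b l)

/-- The cyclic sign of a tuple of points on the circle: the sign of any permutation
rearranging the tuple into cyclic order (well defined for injective tuples of odd
length). -/

noncomputable def cycSgn {m : ℕ} (a : Fin m → S1) : ℤ :=
  if h : ∃ σ : Equiv.Perm (Fin m), InCyclicOrder (a ∘ σ) then
    (Equiv.Perm.sign h.choose : ℤ)
  else 1

lemma sbtw_coe_aux {x y z : ℝ} (hxy : x < y) (hyz : y < z) (hzx : z < x + 1) :
    sbtw (x : S1) (y : S1) (z : S1) := by
  rw [sbtw_iff_btw_not_btw]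
  constructor
  · rw [QuotientAddGroup.btw_coe_iff]
    rw [(toIcoMod_eq_self _).mpr ⟨hxy.le, by linarith⟩,
      (toIocMod_eq_self _).mpr ⟨by linarith, by linarith⟩]
    exact hyz.le
  · rw [QuotientAddGroup.btw_coe_iff]
    have h1 : toIcoMod one_pos z y = y + 1 := by
      rw [toIcoMod_eq_iff]
      exact ⟨⟨by linarith, by linarith⟩, ⟨-1, by rw [zsmul_eq_mul]; push_cast; ring⟩⟩
    have h2 : toIocMod one_pos z x = x + 1 := by
      rw [toIocMod_eq_iff]
      exact ⟨⟨by linarith, by linarith⟩, ⟨-1, by rw [zsmul_eq_mul]; push_cast; ring⟩⟩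
    rw [show (Fact.out : (0:ℝ) < 1) = one_pos from rfl] at *
    rw [h1, h2]
    intro h
    linarith

lemma exists_sort {m : ℕ} (a : Fin m → S1) (ha : Function.Injective a) :
    ∃ σ : Equiv.Perm (Fin m), InCyclicOrder (a ∘ σ) := by
  set f : Fin m → ℝ := fun i => ((AddCircle.equivIco 1 0 (a i) : Set.Ico (0:ℝ) (0+1)) : ℝ)
    with hf
  have hmem : ∀ i, f i ∈ Set.Ico (0:ℝ) (0+1) := fun i => (AddCircle.equivIco 1 0 (a i)).2
  have hcoe : ∀ i, ((f i : ℝ) : S1) = a i := by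
    intro i
    have := (AddCircle.equivIco 1 0).symm_apply_apply (a i)
    rwa [AddCircle.equivIco, QuotientAddGroup.equivIcoMod_symm_apply] at this
  have hfinj : Function.Injective f := by
    intro i j h
    apply ha
    rw [← hcoe i, ← hcoe j, h]
  refine ⟨Tuple.sort f, ?_⟩
  have hmono : StrictMono (f ∘ Tuple.sort f) :=
    (Tuple.monotone_sort f).strictMono_of_injective
      (hfinj.comp (Tuple.sort f).injective)
  intro i j l hij hjl
  have h1 := hmono hij
  have h2 := hmono hjl
  have h3 : f (Tuple.sort f l) < f (Tuple.sort f i) + 1 := by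
    have ha1 := (hmem (Tuple.sort f l)).2
    have ha2 := (hmem (Tuple.sort f i)).1
    simp only [zero_add] at ha1
    linarith
  have hs := sbtw_coe_aux h1 h2 h3
  simp only [Function.comp_apply] at hs ⊢
  rwa [hcoe, hcoe, hcoe] at hs

/-- the cyclic-triple relation on `Fin m`. -/
def CycTriple {m : ℕ} (p q r : Fin m) : Prop :=
  (p < q ∧ q < r) ∨ (q < r ∧ r < p) ∨ (r < p ∧ p < q)

lemma cycTriple_rotate {m : ℕ} {p q r : Fin m} (h : CycTriple p q r) : CycTriple q r p := by
  unfold CycTriple at *; tauto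

lemma cycTriple_total {m : ℕ} {p q r : Fin m} (hpq : p ≠ q) (hqr : q ≠ r) (hpr : p ≠ r) :
    CycTriple p q r ∨ CycTriple r q p := by
  have h1 : p.val ≠ q.val := fun h => hpq (Fin.ext h)
  have h2 : q.val ≠ r.val := fun h => hqr (Fin.ext h)
  have h3 : p.val ≠ r.val := fun h => hpr (Fin.ext h)
  simp only [CycTriple, Fin.lt_def]
  omega

lemma cycTriple_asymm {m : ℕ} {p q r : Fin m} (h : CycTriple p q r) (h' : CycTriple r q p) :
    False := by
  simp only [CycTriple, Fin.lt_def] at h h'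
  omega

lemma val_add_one {m : ℕ} [NeZero m] (x : Fin m) : (x + 1).val = (x.val + 1) % m := by
  rw [Fin.val_add, Fin.val_one', Nat.add_mod x.val 1 m, Nat.mod_eq_of_lt x.isLt]

lemma val_add_one_cases {m : ℕ} [NeZero m] (x : Fin m) :
    ((x + 1).val = x.val + 1 ∧ x.val + 1 < m) ∨ (x.val + 1 = m ∧ (x + 1).val = 0) := by
  have h := val_add_one x
  rcases Nat.lt_or_ge (x.val + 1) m with h' | h'
  · left; rw [h, Nat.mod_eq_of_lt h']; exact ⟨rfl, h'⟩
  · have hx := x.isLt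
    have he : x.val + 1 = m := by omega
    right
    rw [h, he, Nat.mod_self]
    exact ⟨rfl, rfl⟩

lemma cycTriple_succ {m : ℕ} (hm : 3 ≤ m) [NeZero m] (x y : Fin m) (h1 : y ≠ x)
    (h2 : y ≠ x + 1) : CycTriple x (x + 1) y := by
  have hv := val_add_one_cases x
  have hy1 : y.val ≠ x.val := fun h => h1 (Fin.ext h)
  have hy2 : y.val ≠ (x+1).val := fun h => h2 (Fin.ext h)
  have := x.isLt
  have := y.isLt
  simp only [CycTriple, Fin.lt_def]
  omega

lemma not_cycTriple_succ {m : ℕ} (hm : 3 ≤ m) [NeZero m] (i j : Fin m) (h1 : j ≠ i)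
    (h2 : j ≠ i + 1) : ¬ CycTriple i j (i + 1) := by
  have hv := val_add_one_cases i
  have hy1 : j.val ≠ i.val := fun h => h1 (Fin.ext h)
  have hy2 : j.val ≠ (i+1).val := fun h => h2 (Fin.ext h)
  have := i.isLt
  have := j.isLt
  simp only [CycTriple, Fin.lt_def]
  omega

lemma fin_succ_ne_self {m : ℕ} (hm : 3 ≤ m) [NeZero m] (x : Fin m) : x + 1 ≠ x := by
  have hv := val_add_one_cases x
  have := x.isLt
  intro h
  rw [Fin.ext_iff] at h
  omega

lemma perm_succ {m : ℕ} (hm : 3 ≤ m) [NeZero m] (π : Equiv.Perm (Fin m))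
    (hπ : ∀ p q r : Fin m, CycTriple p q r → CycTriple (π p) (π q) (π r)) (i : Fin m) :
    π (i + 1) = π i + 1 := by
  by_contra hne
  set x := π i with hx
  set y := π (i + 1) with hy
  have hi1 : i + 1 ≠ i := fin_succ_ne_self hm i
  have hyx : y ≠ x := fun h => hi1 (π.injective h)
  set j := π.symm (x + 1) with hj
  have hπj : π j = x + 1 := π.apply_symm_apply _
  have hji : j ≠ i := by
    intro h; apply fin_succ_ne_self hm x; rw [← hπj, h, ← hx]
  have hji1 : j ≠ i + 1 := by
    intro h; exact hne (by rw [hy, ← h, hπj])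
  have hCxy : CycTriple x (x + 1) y := cycTriple_succ hm x y hyx (fun h => hne h)
  have hC : CycTriple i j (i + 1) := by
    rcases cycTriple_total (Ne.symm hji) hji1 (Ne.symm hi1) with h | h
    · exact h
    · exfalso
      have := hπ _ _ _ h
      rw [hπj] at this
      exact cycTriple_asymm hCxy this
  exact not_cycTriple_succ hm i j hji hji1 hC

lemma perm_eq_add {m : ℕ} (hm : 3 ≤ m) [NeZero m] (π : Equiv.Perm (Fin m))
    (hπ : ∀ p q r : Fin m, CycTriple p q r → CycTriple (π p) (π q) (π r)) (i : Fin m) :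
    π i = π 0 + i := by
  obtain ⟨v, hv⟩ := i
  induction v with
  | zero =>
      have : (⟨0, hv⟩ : Fin m) = 0 := by rw [Fin.ext_iff]; simp
      rw [this, add_zero]
  | succ v ih =>
      have hv' : v < m := by omega
      have hstep : (⟨v + 1, hv⟩ : Fin m) = ⟨v, hv'⟩ + 1 := by
        rw [Fin.ext_iff, val_add_one]
        exact (Nat.mod_eq_of_lt hv).symm
      rw [hstep, perm_succ hm π hπ, ih hv', add_assoc]

open Fin.NatCast in
lemma sign_add_left (k : ℕ) (c : Fin (2 * k + 1)) :
    Equiv.Perm.sign (Equiv.addLeft c) = 1 := by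
  have key : ∀ j : ℕ, Equiv.Perm.sign (Equiv.addLeft ((j : Fin (2 * k + 1)))) = 1 := by
    intro j
    induction j with
    | zero =>
        have : (Equiv.addLeft ((0 : ℕ) : Fin (2 * k + 1))) = Equiv.refl _ := by
          ext x; simp
        rw [this, Equiv.Perm.sign_refl]
    | succ j ih =>
        have hsplit : (Equiv.addLeft (((j + 1 : ℕ) : Fin (2 * k + 1))))
            = Equiv.addLeft ((1 : Fin (2 * k + 1))) * Equiv.addLeft ((j : Fin (2 * k + 1))) := by
          ext x
          simp only [Equiv.Perm.mul_apply, Equiv.coe_addLeft]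
          push_cast
          congr 1; abel
        have hrot : Equiv.addLeft ((1 : Fin (2 * k + 1))) = finRotate (2 * k + 1) := by
          ext x
          rw [finRotate_succ_apply]
          simp [add_comm]
        rw [hsplit, map_mul, ih, hrot, sign_finRotate, mul_one]
        exact Even.neg_one_pow ⟨k, by omega⟩
  have hc : ((c.val : ℕ) : Fin (2 * k + 1)) = c := Fin.cast_val_eq_self c
  rw [← hc]
  exact key c.val

lemma sign_eq_one (k : ℕ) (b : Fin (2 * k + 1) → S1) (hb : InCyclicOrder b)
    (π : Equiv.Perm (Fin (2 * k + 1))) (hπ : InCyclicOrder (b ∘ π)) :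
    Equiv.Perm.sign π = 1 := by
  rcases k with _ | k'
  · have : π = 1 := by
      ext i
      have h1 := (π i).isLt
      have h2 := i.isLt
      omega
    rw [this, map_one]
  have hm : 3 ≤ 2 * (k' + 1) + 1 := by omega
  -- from hb: cyclic triples give sbtw
  have hbs : ∀ p q r : Fin (2 * (k' + 1) + 1), CycTriple p q r → sbtw (b p) (b q) (b r) := by
    intro p q r h
    rcases h with ⟨h1, h2⟩ | ⟨h1, h2⟩ | ⟨h1, h2⟩
    · exact hb p q r h1 h2
    · exact (hb q r p h1 h2).cyclic_right
    · exact (hb r p q h1 h2).cyclic_left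
  -- sorted triples map to cyclic triples
  have hsorted : ∀ i j l : Fin (2 * (k' + 1) + 1), i < j → j < l →
      CycTriple (π i) (π j) (π l) := by
    intro i j l hij hjl
    have hd1 : π i ≠ π j := fun h => (ne_of_lt hij) (π.injective h)
    have hd2 : π j ≠ π l := fun h => (ne_of_lt hjl) (π.injective h)
    have hd3 : π i ≠ π l := fun h => (ne_of_lt (hij.trans hjl)) (π.injective h)
    rcases cycTriple_total hd1 hd2 hd3 with h | h
    · exact h
    · exfalso
      have hs : sbtw (b (π i)) (b (π j)) (b (π l)) := hπ i j l hij hjl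
      exact (hbs _ _ _ h).not_sbtw hs
  -- all cyclic triples
  have hall : ∀ p q r : Fin (2 * (k' + 1) + 1), CycTriple p q r →
      CycTriple (π p) (π q) (π r) := by
    intro p q r h
    rcases h with ⟨h1, h2⟩ | ⟨h1, h2⟩ | ⟨h1, h2⟩
    · exact hsorted p q r h1 h2
    · exact cycTriple_rotate (cycTriple_rotate (hsorted q r p h1 h2))
    · exact cycTriple_rotate (hsorted r p q h1 h2)
  have hadd : π = Equiv.addLeft (π 0) := Equiv.ext fun i => perm_eq_add hm π hall i
  rw [hadd]
  exact sign_add_left (k' + 1) (π 0)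

theorem stmt2 (k : ℕ) (a : Fin (2 * k + 1) → S1) (ha : Function.Injective a)
    (τ : Equiv.Perm (Fin (2 * k + 1))) :
    cycSgn (a ∘ τ) = (Equiv.Perm.sign τ : ℤ) * cycSgn a := by
  have h₁ : ∃ σ : Equiv.Perm (Fin (2 * k + 1)), InCyclicOrder ((a ∘ τ) ∘ σ) :=
    exists_sort (a ∘ τ) (ha.comp τ.injective)
  have h₂ : ∃ σ : Equiv.Perm (Fin (2 * k + 1)), InCyclicOrder (a ∘ σ) :=
    exists_sort a ha
  rw [cycSgn, dif_pos h₁, cycSgn, dif_pos h₂]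
  set σ₁ := h₁.choose with hσ₁
  set σ₂ := h₂.choose with hσ₂
  have hs₁ : InCyclicOrder ((a ∘ τ) ∘ σ₁) := h₁.choose_spec
  have hs₂ : InCyclicOrder (a ∘ σ₂) := h₂.choose_spec
  set π : Equiv.Perm (Fin (2 * k + 1)) := σ₂⁻¹ * (τ * σ₁) with hπdef
  have hcomp : (a ∘ σ₂) ∘ π = (a ∘ τ) ∘ σ₁ := by
    ext x
    simp [hπdef, Equiv.Perm.mul_apply, Function.comp]
  have hπ : InCyclicOrder ((a ∘ σ₂) ∘ π) := by rw [hcomp]; exact hs₁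
  have hsign : Equiv.Perm.sign π = 1 := sign_eq_one k (a ∘ σ₂) hs₂ π hπ
  have hmul : Equiv.Perm.sign τ * Equiv.Perm.sign σ₁ = Equiv.Perm.sign σ₂ := by
    have h := hsign
    rw [hπdef, map_mul, map_mul, map_inv, inv_mul_eq_one] at h
    exact h.symm
  rcases Int.units_eq_one_or (Equiv.Perm.sign τ) with h | h <;>
    rw [h] at hmul ⊢ <;> rw [← hmul] <;> simp
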